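/- The series ∑_{m=1}^∞ H_{m−1}/m³ converges and equals (1/4) ζ(4). -/

import Mathlib

/-- `ζ(s) = ∑_{n≥1} n^{-s}` for real `s`. -/
noncomputable def zetaR (s : ℝ) : ℝ := ∑' n : ℕ, 1 / ((n : ℝ) + 1) ^ s

/-- `H_M = ∑_{k=1}^M 1/k`, with `H_0 = 0`. -/
noncomputable def harmonicR (M : ℕ) : ℝ := ∑ k ∈ Finset.range M, 1 / ((k : ℝ) + 1)

namespace EulerSum

noncomputable def z2 : ℝ := ∑' n : ℕ, 1 / ((n : ℝ) + 1) ^ 2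
noncomputable def z4 : ℝ := ∑' n : ℕ, 1 / ((n : ℝ) + 1) ^ 4

lemma summable_pow (p : ℕ) (hp : 1 < p) : Summable (fun n : ℕ => 1 / ((n : ℝ) + 1) ^ p) := by
  have := (summable_nat_add_iff 1).2 (Real.summable_one_div_nat_pow.2 hp)
  refine this.congr fun n => by push_cast; ring_nf

lemma hz2 : HasSum (fun n : ℕ => 1 / ((n : ℝ) + 1) ^ 2) z2 :=
  (summable_pow 2 one_lt_two).hasSum

lemma hz4 : HasSum (fun n : ℕ => 1 / ((n : ℝ) + 1) ^ 4) z4 :=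
  (summable_pow 4 (by norm_num)).hasSum

noncomputable def P (p : ℕ × ℕ) : ℝ := 1 / (((p.1 : ℝ) + 1) ^ 2 * ((p.2 : ℝ) + 1) ^ 2)
noncomputable def Bf (p : ℕ × ℕ) : ℝ :=
  1 / (((p.1 : ℝ) + 1) ^ 2 * ((p.1 : ℝ) + (p.2 : ℝ) + 2) ^ 2)
noncomputable def F (p : ℕ × ℕ) : ℝ :=
  1 / (((p.1 : ℝ) + 1) * ((p.1 : ℝ) + (p.2 : ℝ) + 2) ^ 3)
noncomputable def G (p : ℕ × ℕ) : ℝ :=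
  1 / (((p.1 : ℝ) + 1) * ((p.2 : ℝ) + 1) * ((p.1 : ℝ) + (p.2 : ℝ) + 2) ^ 2)

lemma hP : HasSum P (z2 * z2) := by
  have hfib : ∀ a : ℕ, HasSum (fun b => P (a, b)) ((1 / ((a : ℝ) + 1) ^ 2) * z2) := by
    intro a
    have := hz2.mul_left (1 / ((a : ℝ) + 1) ^ 2)
    refine this.congr_fun fun b => ?_
    simp [P]; ring
  have hsumm : Summable P := by
    rw [summable_prod_of_nonneg (fun p => by unfold P; positivity)]
    constructor
    · exact fun a => (hfib a).summable
    · refine (hz2.summable.mul_right z2).congr fun a => ?_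
      rw [(hfib a).tsum_eq]
  have htot : HasSum (fun a : ℕ => (1 / ((a : ℝ) + 1) ^ 2) * z2) (z2 * z2) := hz2.mul_right z2
  have h1 : HasSum (fun a : ℕ => (1 / ((a : ℝ) + 1) ^ 2) * z2) (∑' p, P p) :=
    hsumm.hasSum.prod_fiberwise (fun a => hfib a)
  have : ∑' p, P p = z2 * z2 := h1.unique htot
  exact this ▸ hsumm.hasSum

lemma hBf_summable : Summable Bf := by
  refine hP.summable.of_nonneg_of_le (fun p => by unfold Bf; positivity) fun p => ?_
  unfold Bf P
  apply one_div_le_one_div_of_le (by positivity)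
  have h1 := Nat.cast_nonneg (α := ℝ) p.1
  have h2 := Nat.cast_nonneg (α := ℝ) p.2
  have hy : ((p.2:ℝ) + 1) ^ 2 ≤ ((p.1:ℝ) + (p.2:ℝ) + 2) ^ 2 := by nlinarith
  have hx : (0:ℝ) ≤ ((p.1:ℝ) + 1) ^ 2 := by positivity
  exact mul_le_mul_of_nonneg_left hy hx

noncomputable def Bv : ℝ := ∑' p, Bf p
lemma hBf : HasSum Bf Bv := hBf_summable.hasSum

lemma hF_summable : Summable F := by
  refine hP.summable.of_nonneg_of_le (fun p => by unfold F; positivity) fun p => ?_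
  unfold F P
  apply one_div_le_one_div_of_le (by positivity)
  have h1 := Nat.cast_nonneg (α := ℝ) p.1
  have h2 := Nat.cast_nonneg (α := ℝ) p.2
  have hx : (0:ℝ) < (p.1:ℝ) + 1 := by positivity
  have key : ((p.1:ℝ) + 1) * ((p.2:ℝ) + 1) ^ 2 ≤ ((p.1:ℝ) + (p.2:ℝ) + 2) ^ 3 := by
    have e1 : ((p.1:ℝ) + 1) ≤ (p.1:ℝ) + (p.2:ℝ) + 2 := by linarith
    have e2 : ((p.2:ℝ) + 1) ^ 2 ≤ ((p.1:ℝ) + (p.2:ℝ) + 2) ^ 2 := by nlinarith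
    calc ((p.1:ℝ) + 1) * ((p.2:ℝ) + 1) ^ 2
        ≤ ((p.1:ℝ) + (p.2:ℝ) + 2) * ((p.1:ℝ) + (p.2:ℝ) + 2) ^ 2 :=
          mul_le_mul e1 e2 (by positivity) (by positivity)
      _ = ((p.1:ℝ) + (p.2:ℝ) + 2) ^ 3 := by ring
  nlinarith [mul_le_mul_of_nonneg_left key hx.le]

noncomputable def Tv : ℝ := ∑' p, F p
lemma hF : HasSum F Tv := hF_summable.hasSum

-- swap
lemma hFswap : HasSum (fun p : ℕ × ℕ => F p.swap) Tv := by
  exact (Equiv.prodComm ℕ ℕ).hasSum_iff.2 hF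

lemma hG : HasSum G (Tv + Tv) := by
  have := hF.add hFswap
  refine HasSum.congr_fun this fun p => ?_
  obtain ⟨a, b⟩ := p
  have ha : (0:ℝ) < (a:ℝ) + 1 := by positivity
  have hb : (0:ℝ) < (b:ℝ) + 1 := by positivity
  have hs : (0:ℝ) < (a:ℝ) + (b:ℝ) + 2 := by positivity
  simp only [G, F, Prod.swap]
  field_simp
  ring

lemma hP2 : HasSum P (Bv + Bv + 2 * (Tv + Tv)) := by
  have hBswap : HasSum (fun p : ℕ × ℕ => Bf p.swap) Bv :=
    (Equiv.prodComm ℕ ℕ).hasSum_iff.2 hBf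
  have := (hBf.add hBswap).add ((hG.mul_left 2))
  refine HasSum.congr_fun this fun p => ?_
  obtain ⟨a, b⟩ := p
  have ha : (0:ℝ) < (a:ℝ) + 1 := by positivity
  have hb : (0:ℝ) < (b:ℝ) + 1 := by positivity
  have hs : (0:ℝ) < (a:ℝ) + (b:ℝ) + 2 := by positivity
  simp only [P, Bf, G, Prod.swap]
  field_simp
  ring

-- triangle decomposition of P
noncomputable def Pd (p : ℕ × ℕ) : ℝ := if p.1 = p.2 then P p else 0
noncomputable def Pu (p : ℕ × ℕ) : ℝ := if p.1 < p.2 then P p else 0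
noncomputable def Pl (p : ℕ × ℕ) : ℝ := if p.2 < p.1 then P p else 0

lemma hPd : HasSum Pd z4 := by
  have hinj : Function.Injective (fun n : ℕ => (n, n)) := fun a b h => (Prod.mk.injEq _ _ _ _ ▸ h).1
  rw [← hinj.hasSum_iff (f := Pd) ?side]
  · refine HasSum.congr_fun hz4 fun n => ?_
    have : Pd (n, n) = 1 / (((n:ℝ)+1)^2 * ((n:ℝ)+1)^2) := by simp [Pd, P]
    show Pd (n, n) = 1/((n:ℝ)+1)^4
    rw [this, ← pow_add]
  · rintro ⟨a, b⟩ hab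
    have : a ≠ b := by
      rintro rfl; exact hab ⟨a, rfl⟩
    simp [Pd, this]

noncomputable def eU (p : ℕ × ℕ) : ℕ × ℕ := (p.1, p.1 + p.2 + 1)
noncomputable def eL (p : ℕ × ℕ) : ℕ × ℕ := (p.1 + p.2 + 1, p.1)

lemma hPu : HasSum Pu Bv := by
  have hinj : Function.Injective eU := by
    rintro ⟨a, b⟩ ⟨c, d⟩ h
    simp only [eU, Prod.mk.injEq] at h
    obtain ⟨h1, h2⟩ := h; subst h1
    have : b = d := by omega
    subst this; rfl
  rw [← hinj.hasSum_iff (f := Pu) ?side]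
  · refine HasSum.congr_fun hBf fun p => ?_
    obtain ⟨a, b⟩ := p
    simp only [Function.comp, eU, Pu, P, Bf]
    simp only [show a < a + b + 1 by omega, ↓reduceIte]
    push_cast; ring_nf
  · rintro ⟨a, b⟩ hab
    have : ¬ a < b := by
      intro h
      exact hab ⟨(a, b - a - 1), by simp only [eU, Prod.mk.injEq, true_and]; omega⟩
    simp [Pu, this]

lemma hPl : HasSum Pl Bv := by
  have hinj : Function.Injective eL := by
    rintro ⟨a, b⟩ ⟨c, d⟩ h
    simp only [eL, Prod.mk.injEq] at h
    obtain ⟨h1, h2⟩ := h; subst h2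
    have : b = d := by omega
    subst this; rfl
  rw [← hinj.hasSum_iff (f := Pl) ?side]
  · refine HasSum.congr_fun hBf fun p => ?_
    obtain ⟨a, b⟩ := p
    simp only [Function.comp, eL, Pl, P, Bf]
    simp only [show a < a + b + 1 by omega, ↓reduceIte]
    push_cast; ring_nf
  · rintro ⟨a, b⟩ hab
    have : ¬ b < a := by
      intro h
      exact hab ⟨(b, a - b - 1), by simp only [eL, Prod.mk.injEq, and_true]; omega⟩
    simp [Pl, this]

lemma hPsplit : HasSum P (z4 + Bv + Bv) := by
  have := (hPd.add hPu).add hPl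
  refine HasSum.congr_fun this fun p => ?_
  obtain ⟨a, b⟩ := p
  rcases lt_trichotomy a b with h | h | h
  · simp [Pd, Pu, Pl, h, h.ne, not_lt.2 h.le]
  · subst h; simp [Pd, Pu, Pl]
  · simp [Pd, Pu, Pl, h, h.ne', not_lt.2 h.le]

lemma key : Tv = z4 / 4 := by
  have h1 : z2 * z2 = Bv + Bv + 2 * (Tv + Tv) := hP.unique hP2
  have h2 : z2 * z2 = z4 + Bv + Bv := hP.unique hPsplit
  linarith

noncomputable def F' (p : ℕ × ℕ) : ℝ :=
  if p.1 < p.2 then 1 / (((p.1 : ℝ) + 1) * ((p.2 : ℝ) + 1) ^ 3) else 0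

lemma hF' : HasSum F' Tv := by
  have hinj : Function.Injective eU := by
    rintro ⟨a, b⟩ ⟨c, d⟩ h
    simp only [eU, Prod.mk.injEq] at h
    obtain ⟨h1, h2⟩ := h; subst h1
    have : b = d := by omega
    subst this; rfl
  rw [← hinj.hasSum_iff (f := F') ?side]
  · refine HasSum.congr_fun hF fun p => ?_
    obtain ⟨a, b⟩ := p
    simp only [Function.comp, eU, F', F]
    simp only [show a < a + b + 1 by omega, ↓reduceIte]
    push_cast; ring_nf
  · rintro ⟨a, b⟩ hab
    have : ¬ a < b := by
      intro h
      exact hab ⟨(a, b - a - 1), by simp only [eU, Prod.mk.injEq, true_and]; omega⟩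
    simp [F', this]

lemma zeta4_eq : zetaR 4 = z4 := by
  unfold zetaR z4
  congr 1
  funext n
  rw [show (4:ℝ) = ((4:ℕ):ℝ) by norm_num, Real.rpow_natCast]

set_option maxHeartbeats 1000000 in
lemma main : HasSum (fun m : ℕ => harmonicR m / ((m : ℝ) + 1) ^ 3) (zetaR 4 / 4) := by
  rw [zeta4_eq, ← key]
  have hswap : HasSum (fun p : ℕ × ℕ => F' p.swap) Tv :=
    (Equiv.prodComm ℕ ℕ).hasSum_iff.2 hF'
  refine hswap.prod_fiberwise fun m => ?_
  have hfin : HasSum (fun k : ℕ => F' (k, m)) (∑ k ∈ Finset.range m, F' (k, m)) := by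
    apply hasSum_sum_of_ne_finset_zero
    intro k hk
    have : ¬ k < m := by simpa using hk
    simp [F', this]
  convert hfin using 1
  · rfl
  unfold harmonicR
  rw [Finset.sum_div]
  refine Finset.sum_congr rfl fun k hk => ?_
  have hkm : k < m := Finset.mem_range.1 hk
  rw [F', if_pos hkm]
  field_simp

end EulerSum

/-- Euler sum: `∑_{m≥1} H_{m-1}/m³ = ζ(4)/4`. -/
theorem stmt2 :
    HasSum (fun m : ℕ => harmonicR m / ((m : ℝ) + 1) ^ 3) (zetaR 4 / 4) :=
  EulerSum.main
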